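/- arXiv:2602.14319 — 4 statements merged into one kernel-verified Lean document; each statement's English description precedes it below -/
import Mathlib

section
/- Let g = [a,b,c,r,s,t] be a primitive positive definite integral ternary quadratic form such that at least one of the cross coefficients r, s, t is odd (equivalently, f = 2g is a positive definite improperly primitive integral ternary quadratic form). Then the invariant I₁(g) is negative and odd, 16 divides the invariant I₂(g), and the reciprocal form F_g^B is properly primitive, i.e. its three cross coefficients are all even. -/
/-- An integral ternary quadratic form `[a,b,c,r,s,t]`, denoting
`a*x² + b*y² + c*z² + r*y*z + s*x*z + t*x*y`. -/
structure TernaryQF where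
  a : ℤ
  b : ℤ
  c : ℤ
  r : ℤ
  s : ℤ
  t : ℤ

namespace TernaryQF

def eval (f : TernaryQF) (x y z : ℤ) : ℤ :=
  f.a * x ^ 2 + f.b * y ^ 2 + f.c * z ^ 2 + f.r * y * z + f.s * x * z + f.t * x * y

/-- The content: the gcd of the six coefficients. -/
def content (f : TernaryQF) : ℤ :=
  (Int.gcd (Int.gcd (Int.gcd (Int.gcd (Int.gcd f.a f.b) f.c) f.r) f.s) f.t : ℤ)

def Primitive (f : TernaryQF) : Prop := f.content = 1

def PosDef (f : TernaryQF) : Prop :=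
  ∀ x y z : ℤ, ¬(x = 0 ∧ y = 0 ∧ z = 0) → 0 < f.eval x y z

/-- The adjoint form: the form whose coefficient matrix is `-2 · adjugate(M(f))`,
written out explicitly. -/
def adj (f : TernaryQF) : TernaryQF :=
  ⟨f.r ^ 2 - 4 * f.b * f.c,
   f.s ^ 2 - 4 * f.a * f.c,
   f.t ^ 2 - 4 * f.a * f.b,
   4 * f.a * f.r - 2 * f.s * f.t,
   4 * f.b * f.s - 2 * f.t * f.r,
   4 * f.c * f.t - 2 * f.r * f.s⟩

/-- The basic invariant `I₁(f) = -content(adj f)`. -/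
def I₁ (f : TernaryQF) : ℤ := -f.adj.content

/-- Componentwise division of the coefficients by an integer. -/
def sdiv (f : TernaryQF) (d : ℤ) : TernaryQF :=
  ⟨f.a / d, f.b / d, f.c / d, f.r / d, f.s / d, f.t / d⟩

/-- The Brandt reciprocal form `F_f^B = adj(f) / I₁(f)`. -/
def FB (f : TernaryQF) : TernaryQF := f.adj.sdiv f.I₁

/-- The basic invariant `I₂(f) = I₁(F_f^B)`. -/
def I₂ (f : TernaryQF) : ℤ := f.FB.I₁

lemma content_dvd_a (f : TernaryQF) : f.content ∣ f.a :=
  ((((Int.gcd_dvd_left _ _).trans (Int.gcd_dvd_left _ _)).trans (Int.gcd_dvd_left _ _)).trans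
    (Int.gcd_dvd_left _ _)).trans (Int.gcd_dvd_left _ _)
lemma content_dvd_b (f : TernaryQF) : f.content ∣ f.b :=
  ((((Int.gcd_dvd_left _ _).trans (Int.gcd_dvd_left _ _)).trans (Int.gcd_dvd_left _ _)).trans
    (Int.gcd_dvd_left _ _)).trans (Int.gcd_dvd_right _ _)
lemma content_dvd_c (f : TernaryQF) : f.content ∣ f.c :=
  (((Int.gcd_dvd_left _ _).trans (Int.gcd_dvd_left _ _)).trans (Int.gcd_dvd_left _ _)).trans (Int.gcd_dvd_right _ _)
lemma content_dvd_r (f : TernaryQF) : f.content ∣ f.r :=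
  ((Int.gcd_dvd_left _ _).trans (Int.gcd_dvd_left _ _)).trans (Int.gcd_dvd_right _ _)
lemma content_dvd_s (f : TernaryQF) : f.content ∣ f.s :=
  (Int.gcd_dvd_left _ _).trans (Int.gcd_dvd_right _ _)
lemma content_dvd_t (f : TernaryQF) : f.content ∣ f.t :=
  (Int.gcd_dvd_right _ _)

lemma dvd_content (f : TernaryQF) (d : ℤ) (ha : d ∣ f.a) (hb : d ∣ f.b) (hc : d ∣ f.c)
    (hr : d ∣ f.r) (hs : d ∣ f.s) (ht : d ∣ f.t) : d ∣ f.content :=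
  Int.dvd_coe_gcd (Int.dvd_coe_gcd (Int.dvd_coe_gcd (Int.dvd_coe_gcd (Int.dvd_coe_gcd ha hb) hc) hr) hs) ht

lemma content_nonneg (f : TernaryQF) : 0 ≤ f.content := Int.natCast_nonneg _

end TernaryQF

private lemma even_of_even_sq {n : ℤ} (h : Even (n ^ 2)) : Even n :=
  (Int.even_pow.mp h).1


/-- If `g` is a primitive positive definite integral ternary quadratic form with at
least one odd cross coefficient (so that `f = 2g` is improperly primitive), then
`I₁(g)` is negative and odd, `16 ∣ I₂(g)`, and the reciprocal `F_g^B` is properly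
primitive, i.e. primitive with all three cross coefficients even. -/
theorem improperly_primitive_invariants
    (g : TernaryQF) (hprim : g.Primitive) (hpd : g.PosDef)
    (hodd : Odd g.r ∨ Odd g.s ∨ Odd g.t) :
    g.I₁ < 0 ∧ Odd g.I₁ ∧ (16 : ℤ) ∣ g.I₂ ∧
      g.FB.Primitive ∧ Even g.FB.r ∧ Even g.FB.s ∧ Even g.FB.t := by
  obtain ⟨a, b, c, r, s, t⟩ := g
  set g : TernaryQF := ⟨a, b, c, r, s, t⟩ with hg
  -- positivity facts
  have hc : 0 < c := by
    have := hpd 0 0 1 (by simp)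
    simpa [TernaryQF.eval, hg] using this
  have hadja_neg : r ^ 2 - 4 * b * c < 0 := by
    have h2 := hpd 0 (2 * c) (-r) (by intro h; omega)
    simp only [TernaryQF.eval, hg] at h2
    nlinarith [h2, hc]
  -- the content of the adjoint
  set Ω : ℤ := g.adj.content with hΩ
  have hΩnn : 0 ≤ Ω := g.adj.content_nonneg
  have hΩa : Ω ∣ g.adj.a := g.adj.content_dvd_a
  have hΩb : Ω ∣ g.adj.b := g.adj.content_dvd_b
  have hΩc : Ω ∣ g.adj.c := g.adj.content_dvd_c
  have hΩr : Ω ∣ g.adj.r := g.adj.content_dvd_r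
  have hΩs : Ω ∣ g.adj.s := g.adj.content_dvd_s
  have hΩt : Ω ∣ g.adj.t := g.adj.content_dvd_t
  have hadja : g.adj.a = r ^ 2 - 4 * b * c := rfl
  have hΩne : Ω ≠ 0 := by
    intro h
    rw [h, zero_dvd_iff, hadja] at hΩa
    omega
  have hΩpos : 0 < Ω := lt_of_le_of_ne hΩnn (Ne.symm hΩne)
  -- Ω is odd
  have hΩodd : Odd Ω := by
    rw [← Int.not_even_iff_odd]
    intro he
    have h2 : (2 : ℤ) ∣ Ω := he.two_dvd
    have hr2 : Even r := by
      have hd := h2.trans hΩa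
      have h4 : Even (4 * b * c) := ⟨2 * b * c, by ring⟩
      have h5 : Even (r ^ 2 - 4 * b * c) := even_iff_two_dvd.mpr (by rwa [hadja] at hd)
      exact even_of_even_sq (by simpa using h5.add h4)
    have hs2 : Even s := by
      have hd := h2.trans hΩb
      have h4 : Even (4 * a * c) := ⟨2 * a * c, by ring⟩
      have hb' : g.adj.b = s ^ 2 - 4 * a * c := rfl
      have h5 : Even (s ^ 2 - 4 * a * c) := even_iff_two_dvd.mpr (by rwa [hb'] at hd)
      exact even_of_even_sq (by simpa using h5.add h4)
    have ht2 : Even t := by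
      have hd := h2.trans hΩc
      have h4 : Even (4 * a * b) := ⟨2 * a * b, by ring⟩
      have hc' : g.adj.c = t ^ 2 - 4 * a * b := rfl
      have h5 : Even (t ^ 2 - 4 * a * b) := even_iff_two_dvd.mpr (by rwa [hc'] at hd)
      exact even_of_even_sq (by simpa using h5.add h4)
    rcases hodd with h | h | h
    · exact (Int.not_odd_iff_even.mpr hr2) h
    · exact (Int.not_odd_iff_even.mpr hs2) h
    · exact (Int.not_odd_iff_even.mpr ht2) h
  have hI1 : g.I₁ = -Ω := rfl
  -- FB coefficient equations
  have hdF : ∀ x : ℤ, Ω ∣ x → (x / (-Ω)) * Ω = -x := by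
    intro x hx
    have hx' : (-Ω) ∣ x := (Int.neg_dvd).mpr hx
    have h := Int.ediv_mul_cancel hx'
    linear_combination -h
  have hFa : g.FB.a * Ω = -g.adj.a := hdF _ hΩa
  have hFb : g.FB.b * Ω = -g.adj.b := hdF _ hΩb
  have hFc : g.FB.c * Ω = -g.adj.c := hdF _ hΩc
  have hFr : g.FB.r * Ω = -g.adj.r := hdF _ hΩr
  have hFs : g.FB.s * Ω = -g.adj.s := hdF _ hΩs
  have hFt : g.FB.t * Ω = -g.adj.t := hdF _ hΩt
  -- explicit forms
  have hFa' : g.FB.a * Ω = -(r ^ 2 - 4 * b * c) := hFa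
  have hFb' : g.FB.b * Ω = -(s ^ 2 - 4 * a * c) := hFb
  have hFc' : g.FB.c * Ω = -(t ^ 2 - 4 * a * b) := hFc
  have hFr' : g.FB.r * Ω = -(4 * a * r - 2 * s * t) := hFr
  have hFs' : g.FB.s * Ω = -(4 * b * s - 2 * t * r) := hFs
  have hFt' : g.FB.t * Ω = -(4 * c * t - 2 * r * s) := hFt
  -- evenness of the cross coefficients of FB
  have heven : ∀ x y : ℤ, x * Ω = y → Even y → Even x := by
    intro x y hxy hy
    have hxe : Even (x * Ω) := hxy ▸ hy
    rcases Int.even_mul.mp hxe with h | h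
    · exact h
    · exact absurd hΩodd (Int.not_odd_iff_even.mpr h)
  have hFreven : Even g.FB.r :=
    heven _ _ hFr' ⟨-(2 * a * r - s * t), by ring⟩
  have hFseven : Even g.FB.s :=
    heven _ _ hFs' ⟨-(2 * b * s - t * r), by ring⟩
  have hFteven : Even g.FB.t :=
    heven _ _ hFt' ⟨-(2 * c * t - r * s), by ring⟩
  -- primitivity of FB
  have hFBprim : g.FB.Primitive := by
    have hdvd : g.FB.content * Ω ∣ Ω := by
      have key : ∀ x y : ℤ, g.FB.content ∣ x → x * Ω = -y → g.FB.content * Ω ∣ y := by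
        intro x y hx hxy
        have : g.FB.content * Ω ∣ x * Ω := mul_dvd_mul hx dvd_rfl
        rw [hxy] at this
        exact (dvd_neg.mp this)
      exact TernaryQF.dvd_content _ _
        (key _ _ g.FB.content_dvd_a hFa) (key _ _ g.FB.content_dvd_b hFb)
        (key _ _ g.FB.content_dvd_c hFc) (key _ _ g.FB.content_dvd_r hFr)
        (key _ _ g.FB.content_dvd_s hFs) (key _ _ g.FB.content_dvd_t hFt)
    have h1 : g.FB.content ∣ 1 := by
      have := (mul_dvd_mul_iff_right hΩne).mp (by simpa using hdvd : g.FB.content * Ω ∣ 1 * Ω)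
      exact this
    exact Int.eq_one_of_dvd_one g.FB.content_nonneg h1
  -- the key identity : Ω² · adj(FB) = 16 · disc(g) · g
  set D : ℤ := -4 * a * b * c - r * s * t + a * r ^ 2 + b * s ^ 2 + c * t ^ 2 with hD
  have sq : ∀ x y : ℤ, x * Ω = -y → (x * Ω) ^ 2 = y ^ 2 := by
    intro x y h; rw [h]; ring
  have pr : ∀ x y u v : ℤ, x * Ω = -y → u * Ω = -v → (x * Ω) * (u * Ω) = y * v := by
    intro x y u v h h'; rw [h, h']; ring
  have keyA : Ω ^ 2 * g.FB.adj.a = 16 * D * a := by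
    have h1 := sq _ _ hFr'
    have h2 := pr _ _ _ _ hFb' hFc'
    show Ω ^ 2 * (g.FB.r ^ 2 - 4 * g.FB.b * g.FB.c) = 16 * D * a
    linear_combination h1 - 4 * h2
  have keyB : Ω ^ 2 * g.FB.adj.b = 16 * D * b := by
    have h1 := sq _ _ hFs'
    have h2 := pr _ _ _ _ hFa' hFc'
    show Ω ^ 2 * (g.FB.s ^ 2 - 4 * g.FB.a * g.FB.c) = 16 * D * b
    linear_combination h1 - 4 * h2
  have keyC : Ω ^ 2 * g.FB.adj.c = 16 * D * c := by
    have h1 := sq _ _ hFt'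
    have h2 := pr _ _ _ _ hFa' hFb'
    show Ω ^ 2 * (g.FB.t ^ 2 - 4 * g.FB.a * g.FB.b) = 16 * D * c
    linear_combination h1 - 4 * h2
  have keyR : Ω ^ 2 * g.FB.adj.r = 16 * D * r := by
    have h1 := pr _ _ _ _ hFa' hFr'
    have h2 := pr _ _ _ _ hFs' hFt'
    show Ω ^ 2 * (4 * g.FB.a * g.FB.r - 2 * g.FB.s * g.FB.t) = 16 * D * r
    linear_combination 4 * h1 - 2 * h2
  have keyS : Ω ^ 2 * g.FB.adj.s = 16 * D * s := by
    have h1 := pr _ _ _ _ hFb' hFs'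
    have h2 := pr _ _ _ _ hFt' hFr'
    show Ω ^ 2 * (4 * g.FB.b * g.FB.s - 2 * g.FB.t * g.FB.r) = 16 * D * s
    linear_combination 4 * h1 - 2 * h2
  have keyT : Ω ^ 2 * g.FB.adj.t = 16 * D * t := by
    have h1 := pr _ _ _ _ hFc' hFt'
    have h2 := pr _ _ _ _ hFr' hFs'
    show Ω ^ 2 * (4 * g.FB.c * g.FB.t - 2 * g.FB.r * g.FB.s) = 16 * D * t
    linear_combination 4 * h1 - 2 * h2
  -- 16 divides I₂
  have hcop : IsCoprime (16 : ℤ) (Ω ^ 2) := by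
    have h2 : IsCoprime (2 : ℤ) Ω := by
      rw [Int.prime_two.coprime_iff_not_dvd, ← even_iff_two_dvd]
      exact Int.not_even_iff_odd.mpr hΩodd
    have := h2.pow (m := 4) (n := 2)
    norm_num at this
    exact this
  have h16 : ∀ x y : ℤ, Ω ^ 2 * x = 16 * D * y → (16 : ℤ) ∣ x := by
    intro x y h
    exact hcop.dvd_of_dvd_mul_left ⟨D * y, by linarith [h]⟩
  have h16c : (16 : ℤ) ∣ g.FB.adj.content :=
    TernaryQF.dvd_content _ _ (h16 _ _ keyA) (h16 _ _ keyB) (h16 _ _ keyC)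
      (h16 _ _ keyR) (h16 _ _ keyS) (h16 _ _ keyT)
  have hI2 : (16 : ℤ) ∣ g.I₂ := by
    show (16 : ℤ) ∣ -g.FB.adj.content
    exact (dvd_neg).mpr h16c
  exact ⟨by rw [hI1]; omega, by rw [hI1]; exact hΩodd.neg, hI2, hFBprim, hFreven, hFseven, hFteven⟩
end

section
/- Let q = [a,b,c] be an integral binary quadratic form, let D = b²−4ac, and let f_q be the integral ternary quadratic form f_q(x,y,z) = x² + 4q(y,z) = [1, 4a, 4c, 4b, 0, 0]. Then disc(f_q) = 16D and adj(f_q) = [16D, −16c, −16a, 16b, 0, 0]; consequently content(adj(f_q)) = 16·gcd(a,b,c). In particular, if q is positive definite with content κ, then I₁(f_q) = −16κ and F_{f_q}^B = [−D/κ, c/κ, a/κ, −b/κ, 0, 0], whose restriction to x = 0 is the binary quadratic form (c/κ)y² − (b/κ)yz + (a/κ)z², which is GL₂(ℤ)-equivalent to the primitive binary form (1/κ)q. -/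
/-- An integral binary quadratic form `[a,b,c]`, denoting `a*x² + b*x*y + c*y²`. -/
structure BinaryQF where
  a : ℤ
  b : ℤ
  c : ℤ

namespace BinaryQF

def eval (q : BinaryQF) (x y : ℤ) : ℤ := q.a * x ^ 2 + q.b * x * y + q.c * y ^ 2

def disc (q : BinaryQF) : ℤ := q.b ^ 2 - 4 * q.a * q.c

def content (q : BinaryQF) : ℤ := (Int.gcd (Int.gcd q.a q.b) q.c : ℤ)

def PosDef (q : BinaryQF) : Prop := 0 < q.a ∧ q.disc < 0

/-- `GL₂(ℤ)`-equivalence of binary quadratic forms. -/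
def EquivGL (q₁ q₂ : BinaryQF) : Prop :=
  ∃ M : Matrix (Fin 2) (Fin 2) ℤ, IsUnit M.det ∧
    ∀ x y : ℤ, q₁.eval (M 0 0 * x + M 0 1 * y) (M 1 0 * x + M 1 1 * y) = q₂.eval x y

end BinaryQF

namespace TernaryQF

def disc (f : TernaryQF) : ℤ :=
  -4 * f.a * f.b * f.c - f.r * f.s * f.t +
    f.a * f.r ^ 2 + f.b * f.s ^ 2 + f.c * f.t ^ 2

end TernaryQF

private lemma gcdkey (a b c : ℤ) :
    Int.gcd (Int.gcd (Int.gcd (b ^ 2 - 4 * a * c) (-c)) (-a)) b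
      = Int.gcd (Int.gcd a b) c := by
  apply Nat.dvd_antisymm
  · rw [← Int.natCast_dvd_natCast]
    have h1 : (↑(Int.gcd (Int.gcd (Int.gcd (b ^ 2 - 4 * a * c) (-c)) (-a)) b) : ℤ) ∣ b :=
      (Int.gcd_dvd_right _ _)
    have h2 : (↑(Int.gcd (Int.gcd (Int.gcd (b ^ 2 - 4 * a * c) (-c)) (-a)) b) : ℤ) ∣ -a :=
      dvd_trans (Int.gcd_dvd_left _ _) (Int.gcd_dvd_right _ _)
    have h3 : (↑(Int.gcd (Int.gcd (Int.gcd (b ^ 2 - 4 * a * c) (-c)) (-a)) b) : ℤ) ∣ -c :=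
      dvd_trans (dvd_trans (Int.gcd_dvd_left _ _) (Int.gcd_dvd_left _ _)) (Int.gcd_dvd_right _ _)
    exact Int.dvd_coe_gcd (Int.dvd_coe_gcd (dvd_neg.mp h2) h1) (dvd_neg.mp h3)
  · rw [← Int.natCast_dvd_natCast]
    have ha : (↑(Int.gcd (Int.gcd a b) c) : ℤ) ∣ a := dvd_trans (Int.gcd_dvd_left _ _) (Int.gcd_dvd_left _ _)
    have hb : (↑(Int.gcd (Int.gcd a b) c) : ℤ) ∣ b := dvd_trans (Int.gcd_dvd_left _ _) (Int.gcd_dvd_right _ _)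
    have hc : (↑(Int.gcd (Int.gcd a b) c) : ℤ) ∣ c := (Int.gcd_dvd_right _ _)
    refine Int.dvd_coe_gcd (Int.dvd_coe_gcd (Int.dvd_coe_gcd ?_ hc.neg_right) ha.neg_right) hb
    have h : b ^ 2 - 4 * a * c = b * b - 4 * c * a := by ring
    rw [h]
    exact dvd_sub (hb.mul_left b) (ha.mul_left _)

private lemma gcd16 (D a b c : ℤ) :
    (↑(Int.gcd (Int.gcd (Int.gcd (Int.gcd (Int.gcd (16*D) (-16*c)) (-16*a)) (16*b)) 0) 0) : ℤ)
      = 16 * ↑(Int.gcd (Int.gcd (Int.gcd D (-c)) (-a)) b) := by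
  rw [Int.gcd_zero_right, Int.gcd_zero_right]
  have e1 : Int.gcd (16*D) (-16*c) = 16 * Int.gcd D (-c) := by
    have := Int.gcd_mul_left 16 D (-c); simpa [mul_neg] using this
  rw [e1]
  have e2 : Int.gcd ((16 * Int.gcd D (-c) : ℕ) : ℤ) (-16*a)
      = 16 * Int.gcd ((Int.gcd D (-c) : ℕ) : ℤ) (-a) := by
    have := Int.gcd_mul_left 16 ((Int.gcd D (-c) : ℕ) : ℤ) (-a)
    push_cast
    simpa [mul_neg] using this
  rw [e2]
  have e3 : Int.gcd ((16 * Int.gcd (↑(Int.gcd D (-c))) (-a) : ℕ) : ℤ) (16*b)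
      = 16 * Int.gcd ((Int.gcd (↑(Int.gcd D (-c))) (-a) : ℕ) : ℤ) b := by
    have := Int.gcd_mul_left 16 ((Int.gcd (↑(Int.gcd D (-c))) (-a) : ℕ) : ℤ) b
    push_cast
    simpa using this
  rw [e3]
  push_cast
  simp [Int.gcd]

private lemma div16a (κ x : ℤ) (hκ : κ ≠ 0) (h : κ ∣ x) : 16 * x / -(16 * κ) = -(x / κ) := by
  obtain ⟨d, rfl⟩ := h
  rw [Int.mul_ediv_cancel_left _ hκ,
    show (16:ℤ) * (κ * d) = (16 * κ) * d by ring, Int.ediv_neg,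
    Int.mul_ediv_cancel_left _ (by simp [hκ])]

private lemma div16b (κ x : ℤ) (hκ : κ ≠ 0) (h : κ ∣ x) : -16 * x / -(16 * κ) = x / κ := by
  obtain ⟨d, rfl⟩ := h
  rw [Int.mul_ediv_cancel_left _ hκ,
    show (-16:ℤ) * (κ * d) = (-(16 * κ)) * d by ring,
    Int.mul_ediv_cancel_left _ (by simp [hκ])]

/-- For a binary form `q = [a,b,c]` of discriminant `D`, the ternary form
`f_q = x² + 4q(y,z) = [1,4a,4c,4b,0,0]` satisfies `disc f_q = 16D`,
`adj f_q = [16D,-16c,-16a,16b,0,0]`, so `content (adj f_q) = 16·gcd(a,b,c)`;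
and if `q` is positive definite with content `κ`, then `I₁(f_q) = -16κ`,
`F_{f_q}^B = [-D/κ, c/κ, a/κ, -b/κ, 0, 0]`, whose restriction to `x = 0` is the
binary form `(c/κ)y² - (b/κ)yz + (a/κ)z²`, which is `GL₂(ℤ)`-equivalent to the
primitive form `(1/κ)q`. -/
theorem fq_adjoint_and_reciprocal (a b c : ℤ) (D : ℤ) (hD : D = b ^ 2 - 4 * a * c)
    (fq : TernaryQF) (hfq : fq = ⟨1, 4 * a, 4 * c, 4 * b, 0, 0⟩) :
    fq.disc = 16 * D ∧
    fq.adj = ⟨16 * D, -16 * c, -16 * a, 16 * b, 0, 0⟩ ∧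
    fq.adj.content = 16 * (Int.gcd (Int.gcd a b) c : ℤ) ∧
    ∀ κ : ℤ, BinaryQF.PosDef ⟨a, b, c⟩ → (Int.gcd (Int.gcd a b) c : ℤ) = κ →
      fq.I₁ = -16 * κ ∧
      fq.FB = ⟨-(D / κ), c / κ, a / κ, -(b / κ), 0, 0⟩ ∧
      (∀ y z : ℤ, fq.FB.eval 0 y z =
        BinaryQF.eval ⟨c / κ, -(b / κ), a / κ⟩ y z) ∧
      BinaryQF.EquivGL ⟨c / κ, -(b / κ), a / κ⟩ ⟨a / κ, b / κ, c / κ⟩ := by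
  subst hfq
  have hadj : TernaryQF.adj ⟨1, 4 * a, 4 * c, 4 * b, 0, 0⟩
      = ⟨16 * D, -16 * c, -16 * a, 16 * b, 0, 0⟩ := by
    simp only [TernaryQF.adj, TernaryQF.mk.injEq]
    refine ⟨by rw [hD]; ring, by ring, by ring, by ring, by ring, by ring⟩
  have hcont : (TernaryQF.adj ⟨1, 4 * a, 4 * c, 4 * b, 0, 0⟩).content
      = 16 * (Int.gcd (Int.gcd a b) c : ℤ) := by
    rw [hadj]
    show (↑(Int.gcd (Int.gcd (Int.gcd (Int.gcd (Int.gcd (16*D) (-16*c)) (-16*a)) (16*b)) 0) 0) : ℤ)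
      = 16 * ↑(Int.gcd (Int.gcd a b) c)
    rw [gcd16, hD, gcdkey]
  refine ⟨by simp only [TernaryQF.disc]; rw [hD]; ring, hadj, hcont, ?_⟩
  intro κ hpd hκ
  have hκpos : 0 < κ := by
    rw [← hκ]
    have : Int.gcd (Int.gcd a b) c ≠ 0 := by
      intro h
      rw [Int.gcd_eq_zero_iff] at h
      have h2 : Int.gcd a b = 0 := by exact_mod_cast h.1
      rw [Int.gcd_eq_zero_iff] at h2
      exact hpd.1.ne' h2.1
    positivity
  have hκ0 : κ ≠ 0 := hκpos.ne'
  have hκa : κ ∣ a := hκ ▸ dvd_trans (Int.gcd_dvd_left _ _) (Int.gcd_dvd_left _ _)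
  have hκb : κ ∣ b := hκ ▸ dvd_trans (Int.gcd_dvd_left _ _) (Int.gcd_dvd_right _ _)
  have hκc : κ ∣ c := hκ ▸ (Int.gcd_dvd_right _ _)
  have hκD : κ ∣ D := by
    rw [hD, show b ^ 2 - 4 * a * c = b * b - 4 * c * a by ring]
    exact dvd_sub (hκb.mul_left b) (hκa.mul_left _)
  have hI : TernaryQF.I₁ ⟨1, 4 * a, 4 * c, 4 * b, 0, 0⟩ = -(16 * κ) := by
    rw [TernaryQF.I₁, hcont, hκ]
  have hFB : TernaryQF.FB ⟨1, 4 * a, 4 * c, 4 * b, 0, 0⟩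
      = ⟨-(D / κ), c / κ, a / κ, -(b / κ), 0, 0⟩ := by
    rw [TernaryQF.FB, hI, hadj]
    simp only [TernaryQF.sdiv, TernaryQF.mk.injEq]
    refine ⟨div16a κ D hκ0 hκD, div16b κ c hκ0 hκc, div16b κ a hκ0 hκa, ?_,
      Int.zero_ediv _, Int.zero_ediv _⟩
    rw [div16a κ b hκ0 hκb]
  refine ⟨by rw [hI]; ring, hFB, ?_, ?_⟩
  · intro y z
    rw [hFB]
    simp only [TernaryQF.eval, BinaryQF.eval]
    ring
  · refine ⟨!![0, 1; -1, 0], ?_, fun x y => ?_⟩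
    · simp [Matrix.det_fin_two_of]
    · have e00 : !![(0:ℤ), 1; -1, 0] 0 0 = 0 := by simp
      have e01 : !![(0:ℤ), 1; -1, 0] 0 1 = 1 := by simp
      have e10 : !![(0:ℤ), 1; -1, 0] 1 0 = -1 := by simp
      have e11 : !![(0:ℤ), 1; -1, 0] 1 1 = 0 := by simp
      rw [e00, e01, e10, e11]
      simp only [BinaryQF.eval]
      ring
end

section
/- Let f be a primitive integral ternary quadratic form and n ≥ 1 an integer. Then there exist integers x, y, z with gcd(x,y,z) = 1 such that gcd(f(x,y,z), n) = 1. -/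
private lemma eval_modeq (f : TernaryQF) {q x x' y y' z z' : ℤ} (hx : x ≡ x' [ZMOD q])
    (hy : y ≡ y' [ZMOD q]) (hz : z ≡ z' [ZMOD q]) :
    f.eval x y z ≡ f.eval x' y' z' [ZMOD q] := by
  unfold TernaryQF.eval
  exact ((((((hx.pow 2).mul_left f.a).add ((hy.pow 2).mul_left f.b)).add
    ((hz.pow 2).mul_left f.c)).add (((hy.mul_left f.r)).mul hz)).add
    ((hx.mul_left f.s).mul hz)).add ((hx.mul_left f.t).mul hy)

/-- For a prime `p`, some value of a primitive form is not divisible by `p`. -/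
private lemma exists_not_dvd (f : TernaryQF) (hprim : f.Primitive) {p : ℕ} (hp : p.Prime) :
    ∃ x y z : ℤ, ¬ (p : ℤ) ∣ f.eval x y z := by
  by_contra h
  push_neg at h
  have ha : (p : ℤ) ∣ f.a := by have := h 1 0 0; simpa [TernaryQF.eval] using this
  have hb : (p : ℤ) ∣ f.b := by have := h 0 1 0; simpa [TernaryQF.eval] using this
  have hc : (p : ℤ) ∣ f.c := by have := h 0 0 1; simpa [TernaryQF.eval] using this
  have hbc : (p : ℤ) ∣ f.b + f.c + f.r := by
    have := h 0 1 1; simpa [TernaryQF.eval] using this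
  have hac : (p : ℤ) ∣ f.a + f.c + f.s := by
    have := h 1 0 1; simpa [TernaryQF.eval] using this
  have hab : (p : ℤ) ∣ f.a + f.b + f.t := by
    have := h 1 1 0; simpa [TernaryQF.eval] using this
  have hr : (p : ℤ) ∣ f.r := by
    have h' := (hbc.sub hb).sub hc
    rwa [show f.b + f.c + f.r - f.b - f.c = f.r by ring] at h'
  have hs : (p : ℤ) ∣ f.s := by
    have h' := (hac.sub ha).sub hc
    rwa [show f.a + f.c + f.s - f.a - f.c = f.s by ring] at h'
  have ht : (p : ℤ) ∣ f.t := by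
    have h' := (hab.sub ha).sub hb
    rwa [show f.a + f.b + f.t - f.a - f.b = f.t by ring] at h'
  have hdvd : (p : ℤ) ∣ f.content :=
    Int.dvd_coe_gcd (Int.dvd_coe_gcd (Int.dvd_coe_gcd (Int.dvd_coe_gcd (Int.dvd_coe_gcd ha hb) hc) hr) hs) ht
  rw [hprim] at hdvd
  have h1 : (p : ℤ) ≤ 1 := Int.le_of_dvd one_pos hdvd
  have h2 := hp.two_le
  omega

/-- Main induction: some value of a primitive form is coprime to `n`. -/
private lemma key (f : TernaryQF) (hprim : f.Primitive) :
    ∀ n : ℕ, 0 < n → ∃ x y z : ℤ, IsCoprime (f.eval x y z) (n : ℤ) := by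
  intro n
  induction n using Nat.strong_induction_on with
  | _ n ih =>
    intro hn
    by_cases h1 : n = 1
    · exact ⟨1, 0, 0, by rw [h1]; exact isCoprime_one_right⟩
    · set p := n.minFac with hpdef
      have hp : p.Prime := Nat.minFac_prime h1
      have hpn : p ∣ n := Nat.minFac_dvd n
      set k := n.factorization p with hkdef
      set q := p ^ k with hqdef
      set m := n / q with hmdef
      have hn0 : n ≠ 0 := hn.ne'
      have hqm : q * m = n := Nat.ordProj_mul_ordCompl_eq_self n p
      have hm0 : 0 < m := Nat.ordCompl_pos p hn0
      have hk1 : 1 ≤ k := Nat.Prime.factorization_pos_of_dvd hp hn0 hpn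
      have hq2 : 2 ≤ q := by
        calc 2 ≤ p := hp.two_le
        _ = p ^ 1 := (pow_one p).symm
        _ ≤ p ^ k := Nat.pow_le_pow_right hp.pos hk1
      have hmn : m < n := by
        rw [← hqm]
        calc m = 1 * m := (one_mul m).symm
        _ < q * m := (Nat.mul_lt_mul_right hm0).2 (by omega)
      have hcop : Nat.Coprime q m := (Nat.coprime_ordCompl hp hn0).pow_left k
      -- solution mod q
      obtain ⟨x1, y1, z1, h1'⟩ := exists_not_dvd f hprim hp
      have hcop1 : IsCoprime (f.eval x1 y1 z1) ((q : ℕ) : ℤ) := by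
        have : IsCoprime (f.eval x1 y1 z1) ((p : ℤ) ^ k) :=
          ((((Nat.prime_iff_prime_int.mp hp).coprime_iff_not_dvd).2 h1').symm).pow_right
        simpa [hqdef] using this
      -- solution mod m
      obtain ⟨x2, y2, z2, h2'⟩ := ih m hmn hm0
      -- combine
      obtain ⟨u, v, huv⟩ := Nat.isCoprime_iff_coprime.2 hcop
      set X := x1 * (v * (m : ℤ)) + x2 * (u * (q : ℤ)) with hXdef
      set Y := y1 * (v * (m : ℤ)) + y2 * (u * (q : ℤ)) with hYdef
      set Z := z1 * (v * (m : ℤ)) + z2 * (u * (q : ℤ)) with hZdef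
      refine ⟨X, Y, Z, ?_⟩
      have modq : ∀ w1 w2 : ℤ, w1 * (v * (m : ℤ)) + w2 * (u * (q : ℤ)) ≡ w1 [ZMOD (q : ℤ)] := by
        intro w1 w2
        have : (q : ℤ) ∣ w1 - (w1 * (v * (m : ℤ)) + w2 * (u * (q : ℤ))) :=
          ⟨u * (w1 - w2), by linear_combination (-w1) * huv⟩
        exact (Int.modEq_iff_dvd.2 this)
      have modm : ∀ w1 w2 : ℤ, w1 * (v * (m : ℤ)) + w2 * (u * (q : ℤ)) ≡ w2 [ZMOD (m : ℤ)] := by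
        intro w1 w2
        have : (m : ℤ) ∣ w2 - (w1 * (v * (m : ℤ)) + w2 * (u * (q : ℤ))) :=
          ⟨v * (w2 - w1), by linear_combination (-w2) * huv⟩
        exact (Int.modEq_iff_dvd.2 this)
      have hq' : IsCoprime (f.eval X Y Z) ((q : ℕ) : ℤ) := by
        have hmq := eval_modeq f (modq x1 x2) (modq y1 y2) (modq z1 z2)
        obtain ⟨t, ht⟩ := (Int.ModEq.dvd hmq)
        have : f.eval X Y Z = f.eval x1 y1 z1 + (q : ℤ) * (-t) := by
          rw [hXdef, hYdef, hZdef]; linear_combination -ht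
        rw [this]
        exact hcop1.add_mul_left_left (-t)
      have hm' : IsCoprime (f.eval X Y Z) ((m : ℕ) : ℤ) := by
        have hmm := eval_modeq f (modm x1 x2) (modm y1 y2) (modm z1 z2)
        obtain ⟨t, ht⟩ := (Int.ModEq.dvd hmm)
        have : f.eval X Y Z = f.eval x2 y2 z2 + (m : ℤ) * (-t) := by
          rw [hXdef, hYdef, hZdef]; linear_combination -ht
        rw [this]
        exact h2'.add_mul_left_left (-t)
      have := hq'.mul_right hm'
      rw [show ((q : ℕ) : ℤ) * ((m : ℕ) : ℤ) = ((n : ℕ) : ℤ) by push_cast [← hqm]; ring] at this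
      exact this

/-- For a primitive ternary quadratic form `f` and an integer `n ≥ 1`, there are
integers `x, y, z` with `gcd(x,y,z) = 1` such that `gcd(f(x,y,z), n) = 1`. -/
theorem primitive_ternary_represents_coprime
    (f : TernaryQF) (hprim : f.Primitive) (n : ℕ) (hn : 1 ≤ n) :
    ∃ x y z : ℤ, Int.gcd (Int.gcd x y) z = 1 ∧
      Int.gcd (f.eval x y z) (n : ℤ) = 1 := by
  obtain ⟨x, y, z, hco⟩ := key f hprim n hn
  have hgcd : Int.gcd (f.eval x y z) (n : ℤ) = 1 := Int.isCoprime_iff_gcd_eq_one.1 hco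
  set d : ℕ := Int.gcd (Int.gcd x y) z with hd
  by_cases hd0 : d = 0
  · -- then x = y = z = 0 and f.eval = 0, forcing n = 1
    have h0 := Int.gcd_eq_zero_iff.1 hd0
    have hxy : Int.gcd x y = 0 := by exact_mod_cast h0.1
    have hxy' := Int.gcd_eq_zero_iff.1 hxy
    have hx : x = 0 := hxy'.1
    have hy : y = 0 := hxy'.2
    have hz : z = 0 := h0.2
    have he : f.eval x y z = 0 := by simp [hx, hy, hz, TernaryQF.eval]
    have hn1 : n = 1 := by
      rw [he] at hgcd
      simpa using hgcd
    exact ⟨1, 0, 0, by simp, by rw [hn1]; simp⟩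
  · have hdx : (d : ℤ) ∣ x := dvd_trans (Int.gcd_dvd_left _ _) (Int.gcd_dvd_left _ _)
    have hdy : (d : ℤ) ∣ y := dvd_trans (Int.gcd_dvd_left _ _) (Int.gcd_dvd_right _ _)
    have hdz : (d : ℤ) ∣ z := Int.gcd_dvd_right _ _
    obtain ⟨x', hx'⟩ := hdx
    obtain ⟨y', hy'⟩ := hdy
    obtain ⟨z', hz'⟩ := hdz
    have heval : f.eval x y z = (d : ℤ) ^ 2 * f.eval x' y' z' := by
      rw [hx', hy', hz']; unfold TernaryQF.eval; ring
    refine ⟨x', y', z', ?_, ?_⟩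
    · -- gcd of the divided triple is 1
      set g : ℕ := Int.gcd (Int.gcd x' y') z' with hg
      have hgx : ((d * g : ℕ) : ℤ) ∣ x := by
        push_cast
        exact hx' ▸ mul_dvd_mul_left (d : ℤ)
          (dvd_trans (Int.gcd_dvd_left _ _) (Int.gcd_dvd_left _ _))
      have hgy : ((d * g : ℕ) : ℤ) ∣ y := by
        push_cast
        exact hy' ▸ mul_dvd_mul_left (d : ℤ)
          (dvd_trans (Int.gcd_dvd_left _ _) (Int.gcd_dvd_right _ _))
      have hgz : ((d * g : ℕ) : ℤ) ∣ z := by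
        push_cast
        exact hz' ▸ mul_dvd_mul_left (d : ℤ) (Int.gcd_dvd_right _ _)
      have : ((d * g : ℕ) : ℤ) ∣ (d : ℤ) := Int.dvd_coe_gcd (Int.dvd_coe_gcd hgx hgy) hgz
      have hnat : d * g ∣ d := Int.natCast_dvd_natCast.1 this
      have hle : d * g ≤ d := Nat.le_of_dvd (Nat.pos_of_ne_zero hd0) hnat
      have hg1 : g ≠ 0 := by
        intro hzz
        rw [hzz, Nat.mul_zero] at hnat
        exact hd0 (Nat.eq_zero_of_zero_dvd hnat)
      have hge : d ≤ d * g := Nat.le_mul_of_pos_right d (Nat.pos_of_ne_zero hg1)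
      have : d * g = d * 1 := by omega
      exact Nat.eq_of_mul_eq_mul_left (Nat.pos_of_ne_zero hd0) this
    · -- gcd of values: divides the original gcd which is 1
      have h1 : ((Int.gcd (f.eval x' y' z') (n : ℤ) : ℕ) : ℤ) ∣ f.eval x y z := by
        rw [heval]
        exact Dvd.dvd.mul_left (Int.gcd_dvd_left _ _) _
      have h2 : ((Int.gcd (f.eval x' y' z') (n : ℤ) : ℕ) : ℤ) ∣ (n : ℤ) :=
        Int.gcd_dvd_right _ _
      have h3 : ((Int.gcd (f.eval x' y' z') (n : ℤ) : ℕ) : ℤ) ∣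
          ((Int.gcd (f.eval x y z) (n : ℤ) : ℕ) : ℤ) := Int.dvd_coe_gcd h1 h2
      rw [hgcd] at h3
      have : Int.gcd (f.eval x' y' z') (n : ℤ) ∣ 1 := Int.natCast_dvd_natCast.1 (by exact_mod_cast h3)
      exact Nat.dvd_one.1 this
end

section
/- Let d ≥ 1 be an integer and let s = (n, m, k) be a triple of integers with n > 0, m > 0 and nm − k²d = 1. Then the binary quadratic form q_s(x,y) = n²x² + 2kd(nm+2)xy + m²d(nm+3)y² is a positive definite integral binary quadratic form of discriminant −16d. -/
/-- For `d ≥ 1` and a triple `s = (n,m,k)` with `n, m > 0` and `nm - k²d = 1`, the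
form `q_s(x,y) = n²x² + 2kd(nm+2)xy + m²d(nm+3)y²` is a positive definite integral
binary quadratic form of discriminant `-16d`. -/
theorem qs_posdef_disc
    (d n m k : ℤ) (hd : 1 ≤ d) (hn : 0 < n) (hm : 0 < m)
    (hs : n * m - k ^ 2 * d = 1) :
    BinaryQF.PosDef ⟨n ^ 2, 2 * k * d * (n * m + 2), m ^ 2 * d * (n * m + 3)⟩ ∧
      BinaryQF.disc ⟨n ^ 2, 2 * k * d * (n * m + 2), m ^ 2 * d * (n * m + 3)⟩
        = -16 * d := by
  have hdisc : BinaryQF.disc ⟨n ^ 2, 2 * k * d * (n * m + 2), m ^ 2 * d * (n * m + 3)⟩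
      = -16 * d := by
    unfold BinaryQF.disc
    linear_combination (-4 * d * (n * m + 2) ^ 2) * hs
  exact ⟨⟨pow_pos hn 2, hdisc ▸ by linarith⟩, hdisc⟩
end
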